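/- Fix a natural number n ≥ 2. Define a sequence A : ℕ → ℕ by A(0) = 1 and, for l ≥ 1, A(l) = Σ A(l₂)·A(l₃)···A(lₙ), the sum running over all (n-1)-tuples (l₂, …, lₙ) of nonnegative integers with l₂ + ⋯ + lₙ = l - 1. Let F be the formal power series over ℚ given by F = Σ_{l ≥ 0} A(l)·X^(l(n-1)+1), and let G = X·(1 + X^(n-1))⁻¹ (a well-defined power series since 1 + X^(n-1) has constant term 1). Then substituting F into G yields the identity series X; that is, F is the formal compositional inverse of G. -/

import Mathlib

open Finset PowerSeries

lemma aux_sum (k m : ℕ) (g : ℕ → ℚ) :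
    ∑ l ∈ Finset.finsuppAntidiag (Finset.range k) m, ∏ i ∈ Finset.range k, g (l i)
      = ∑ x ∈ Finset.Nat.antidiagonalTuple k m, ∏ i, g (x i) := by
  apply Finset.sum_nbij' (fun l => fun i : Fin k => l i.1)
    (fun x => Finsupp.onFinset (Finset.range k)
      (fun i => if h : i < k then x ⟨i, h⟩ else 0)
      (by intro i hi; rw [Finset.mem_range]; by_contra h; simp [h] at hi))
  · intro l hl
    rw [Finset.Nat.mem_antidiagonalTuple]
    rw [Finset.mem_finsuppAntidiag] at hl
    rw [← hl.1]
    exact (Finset.sum_range fun i => l i).symm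
  · intro x hx
    rw [Finset.Nat.mem_antidiagonalTuple] at hx
    rw [Finset.mem_finsuppAntidiag]
    constructor
    · rw [Finset.sum_range]
      simp only [Finsupp.onFinset_apply]
      rw [← hx]
      apply Finset.sum_congr rfl
      intro i _
      simp [i.2]
    · exact Finsupp.support_onFinset_subset
  · intro l hl
    rw [Finset.mem_finsuppAntidiag] at hl
    ext i
    simp only [Finsupp.onFinset_apply]
    split_ifs with h
    · rfl
    · by_contra hne
      have : i ∈ l.support := by simpa [eq_comm] using hne
      have := hl.2 this
      rw [Finset.mem_range] at this
      exact h this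
  · intro x hx
    ext i
    simp [i.2]
  · intro l hl
    rw [Finset.prod_range fun i => g (l i)]

lemma coeff_pow_tuple (k m : ℕ) (φ : PowerSeries ℚ) :
    PowerSeries.coeff m (φ ^ k)
      = ∑ x ∈ Finset.Nat.antidiagonalTuple k m, ∏ i, PowerSeries.coeff (x i) φ := by
  rw [PowerSeries.coeff_pow]; exact aux_sum k m (fun j => PowerSeries.coeff j φ)


/-- Fix `n ≥ 2`.  Let `A : ℕ → ℕ` satisfy `A 0 = 1` and, for `l ≥ 1`,
`A l = Σ A l₂ ⋯ A lₙ`, the sum over all `(n-1)`-tuples of nonnegative integers with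
`l₂ + ⋯ + lₙ = l - 1`.  Let `F` be the power series over `ℚ` whose coefficient at
`X^(l(n-1)+1)` is `A l` and whose other coefficients vanish, and let
`G = X·(1 + X^(n-1))⁻¹`.  Then substituting `F` into `G`, which gives
`F·(1 + F^(n-1))⁻¹`, yields the identity series `X`; that is, `F` is the formal
compositional inverse of `G`. -/
theorem stmt_15 (n : ℕ) (hn : 2 ≤ n) (A : ℕ → ℕ) (hA0 : A 0 = 1)
    (hArec : ∀ l : ℕ, 1 ≤ l →
      A l = ∑ x ∈ Finset.Nat.antidiagonalTuple (n - 1) (l - 1), ∏ i, A (x i))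
    (F : PowerSeries ℚ)
    (hF : ∀ l : ℕ, PowerSeries.coeff (l * (n - 1) + 1) F = A l)
    (hF' : ∀ k : ℕ, (¬ ∃ l : ℕ, k = l * (n - 1) + 1) → PowerSeries.coeff k F = 0) :
    F * (1 + F ^ (n - 1))⁻¹ = PowerSeries.X := by
  set m := n - 1 with hm
  have hm1 : 1 ≤ m := by omega
  have hF0 : PowerSeries.constantCoeff F = 0 := by
    have := hF' 0 (by rintro ⟨l, hl⟩; omega)
    simpa using this
  have hc : PowerSeries.constantCoeff (1 + F ^ m) ≠ 0 := by
    simp [hF0, zero_pow (by omega : m ≠ 0)]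
  have key : F = PowerSeries.X * (1 + F ^ m) := by
    ext k
    cases k with
    | zero =>
      simpa [PowerSeries.coeff_zero_eq_constantCoeff] using hF0
    | succ k =>
      rw [PowerSeries.coeff_succ_X_mul, map_add]
      rcases Nat.eq_zero_or_pos k with rfl | hk
      · have h1 : PowerSeries.coeff 1 F = A 0 := by simpa using hF 0
        rw [h1, hA0]
        simp [PowerSeries.coeff_zero_eq_constantCoeff, hF0, zero_pow (by omega : m ≠ 0)]
      · have hone : (PowerSeries.coeff k) (1 : PowerSeries ℚ) = 0 := by
          rw [PowerSeries.coeff_one]; simp [hk.ne']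
        rw [hone, zero_add, coeff_pow_tuple]
        have hshape : ∀ j : ℕ, PowerSeries.coeff j F ≠ 0 → j = ((j - 1) / m) * m + 1 := by
          intro j hj
          obtain ⟨c, hc⟩ := of_not_not (mt (hF' j) hj)
          subst hc
          congr 1
          rw [Nat.add_sub_cancel, Nat.mul_div_cancel _ (by omega : 0 < m)]
        by_cases hdiv : ∃ L : ℕ, 1 ≤ L ∧ k = L * m
        · obtain ⟨L, hL1, rfl⟩ := hdiv
          obtain ⟨p, rfl⟩ : ∃ p, L = p + 1 := ⟨L - 1, by omega⟩
          rw [hF (p + 1), hArec (p + 1) (by omega)]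
          push_cast
          refine Finset.sum_bij_ne_zero (fun y _ _ => fun j : Fin m => y j * m + 1)
            ?_ ?_ ?_ ?_
          · intro y hy _
            rw [Finset.Nat.mem_antidiagonalTuple] at hy ⊢
            rw [Finset.sum_add_distrib, ← Finset.sum_mul, hy]
            simp only [Finset.sum_const, Finset.card_univ, Fintype.card_fin, smul_eq_mul,
              mul_one, add_mul, one_mul]
          · intro y₁ h₁₁ h₁₂ y₂ h₂₁ h₂₂ he
            funext j
            have h1 : y₁ j * m + 1 = y₂ j * m + 1 := congrFun he j
            exact Nat.eq_of_mul_eq_mul_right (by omega : 0 < m) (Nat.add_right_cancel h1)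
          · intro x hx hxne
            have hne2 := Finset.prod_ne_zero_iff.mp hxne
            have hxs : ∀ j : Fin m, x j = ((x j - 1) / m) * m + 1 :=
              fun j => hshape (x j) (hne2 j (Finset.mem_univ j))
            have hcoeffA : ∀ j : Fin m,
                PowerSeries.coeff (x j) F = A ((x j - 1) / m) := by
              intro j
              conv_lhs => rw [hxs j]
              exact hF _
            refine ⟨fun j => (x j - 1) / m, ?_, ?_, ?_⟩
            · rw [Finset.Nat.mem_antidiagonalTuple] at hx ⊢
              have hsum : (∑ j : Fin m, (x j - 1) / m) * m + m = (p + 1) * m := by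
                rw [← hx]
                calc (∑ j : Fin m, (x j - 1) / m) * m + m
                    = ∑ j : Fin m, (((x j - 1) / m) * m + 1) := by
                      rw [Finset.sum_add_distrib, Finset.sum_mul]
                      simp only [Finset.sum_const, Finset.card_univ, Fintype.card_fin,
                        smul_eq_mul, mul_one]
                  _ = ∑ j : Fin m, x j := Finset.sum_congr rfl fun j _ => (hxs j).symm
              rw [add_mul, one_mul] at hsum
              exact Nat.eq_of_mul_eq_mul_right (by omega : 0 < m)
                (Nat.add_right_cancel hsum)
            · rw [Finset.prod_ne_zero_iff]
              intro j _
              have := hne2 j (Finset.mem_univ j)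
              rw [hcoeffA j] at this
              exact this
            · funext j
              exact (hxs j).symm
          · intro y _ _
            refine Finset.prod_congr rfl fun j _ => (hF (y j)).symm
        · have hlhs : PowerSeries.coeff (k + 1) F = 0 := by
            apply hF'
            rintro ⟨l, hl⟩
            have hk' : k = l * m := Nat.add_right_cancel hl
            rcases Nat.eq_zero_or_pos l with rfl | hl1
            · rw [zero_mul] at hk'; omega
            · exact hdiv ⟨l, hl1, hk'⟩
          rw [hlhs]
          symm
          apply Finset.sum_eq_zero
          intro x hx
          by_contra hne
          have hne2 := Finset.prod_ne_zero_iff.mp hne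
          have hxs : ∀ j : Fin m, x j = ((x j - 1) / m) * m + 1 :=
            fun j => hshape (x j) (hne2 j (Finset.mem_univ j))
          rw [Finset.Nat.mem_antidiagonalTuple] at hx
          have hsum : k = (∑ j : Fin m, (x j - 1) / m) * m + m := by
            rw [← hx]
            calc ∑ j : Fin m, x j
                = ∑ j : Fin m, (((x j - 1) / m) * m + 1) :=
                  Finset.sum_congr rfl fun j _ => hxs j
              _ = _ := by
                  rw [Finset.sum_add_distrib, Finset.sum_mul]
                  simp only [Finset.sum_const, Finset.card_univ, Fintype.card_fin,
                    smul_eq_mul, mul_one]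
          exact hdiv ⟨(∑ j : Fin m, (x j - 1) / m) + 1, by omega,
            by rw [hsum, add_mul, one_mul]⟩
  calc F * (1 + F ^ m)⁻¹ = PowerSeries.X * (1 + F ^ m) * (1 + F ^ m)⁻¹ := by rw [← key]
    _ = PowerSeries.X := by
        rw [mul_assoc, PowerSeries.mul_inv_cancel _ hc, mul_one]
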